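/- Fix u > 0, a > 0, b > 0 and λ ∈ (0,1), and for δ > −1 set s(δ) := D(δ)/√K(δ), where D(δ) := 1 − λ + λ a (1+δ) and K(δ) := u(1 − λ + λ b²(1+δ)²) + (1 − λ + λ a²(1+δ)²) − D(δ)² (one has K(δ) > 0). Then s is differentiable in δ and ∂s/∂δ > 0 if and only if 1 + u > a·(1 + (b²/a²)·u)·(1+δ), equivalently a(1+u) > (a² + b² u)(1+δ). -/

import Mathlib

/-- Monotonicity of the two-state portfolio Sharpe ratio in the allocation
change δ: for δ > −1, s(δ) = D(δ)/√K(δ) is differentiable (K(δ) > 0) and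
∂s/∂δ > 0 iff 1 + u > a(1 + (b²/a²)u)(1+δ), equivalently a(1+u) > (a² + b²u)(1+δ). -/
theorem sharpe_monotone_in_delta
    (u a b lam : ℝ) (hu : 0 < u) (ha : 0 < a) (hb : 0 < b)
    (hlam : lam ∈ Set.Ioo (0:ℝ) 1)
    (D K s : ℝ → ℝ)
    (hD : ∀ δ, D δ = 1 - lam + lam * a * (1 + δ))
    (hK : ∀ δ, K δ = u * (1 - lam + lam * b^2 * (1+δ)^2)
        + (1 - lam + lam * a^2 * (1+δ)^2) - (D δ)^2)
    (hs : ∀ δ, -1 < δ → s δ = D δ / Real.sqrt (K δ)) :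
    ∀ δ, -1 < δ →
      0 < K δ ∧ DifferentiableAt ℝ s δ ∧
      (0 < deriv s δ ↔ a * (1 + b^2/a^2 * u) * (1+δ) < 1 + u) ∧
      (0 < deriv s δ ↔ (a^2 + b^2*u) * (1+δ) < a * (1+u)) := by
  intro δ hδ
  obtain ⟨hl, hl1⟩ := hlam
  have h1l : 0 < 1 - lam := by linarith
  have ht : 0 < 1 + δ := by linarith
  -- K > 0
  have hKval : K δ = u * (1 - lam + lam * b^2 * (1+δ)^2)
      + (1 - lam + lam * a^2 * (1+δ)^2) - (1 - lam + lam * a * (1 + δ))^2 := by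
    rw [hK, hD]
  have hKpos : 0 < K δ := by
    rw [hKval]
    nlinarith [mul_pos hu h1l,
      mul_pos (mul_pos (mul_pos hu hl) (pow_pos hb 2)) (pow_pos ht 2),
      mul_nonneg (mul_nonneg hl.le h1l.le) (sq_nonneg (1 - a*(1+δ)))]
  -- explicit function f agreeing with s near δ
  set f : ℝ → ℝ := fun x => (1 - lam + lam * a * (1 + x)) /
      Real.sqrt (u * (1 - lam + lam * b^2 * (1+x)^2)
        + (1 - lam + lam * a^2 * (1+x)^2) - (1 - lam + lam * a * (1 + x))^2)
    with hf
  have hmem : Set.Ioi (-1:ℝ) ∈ nhds δ := isOpen_Ioi.mem_nhds hδ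
  have heq : s =ᶠ[nhds δ] f := by
    filter_upwards [hmem] with x hx
    rw [hs x hx, hD, hK, hD]
  -- derivatives
  have hDd : HasDerivAt (fun x : ℝ => 1 - lam + lam * a * (1 + x)) (lam * a) δ := by
    have h := (((hasDerivAt_id δ).const_add (1:ℝ)).const_mul (lam * a)).const_add (1 - lam)
    simpa using h
  have hsq : HasDerivAt (fun x : ℝ => (1+x)^2) (2*(1+δ)) δ := by
    have h0 := ((hasDerivAt_id δ).const_add (1:ℝ)).pow 2
    exact h0.congr_deriv (by push_cast [id_eq]; ring)
  set Dv : ℝ := 1 - lam + lam * a * (1 + δ) with hDv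
  set K' : ℝ := u * (lam * b^2 * (2*(1+δ))) + lam * a^2 * (2*(1+δ)) - 2 * Dv * (lam * a)
    with hK'
  have hKd : HasDerivAt (fun x : ℝ => u * (1 - lam + lam * b^2 * (1+x)^2)
      + (1 - lam + lam * a^2 * (1+x)^2) - (1 - lam + lam * a * (1 + x))^2) K' δ := by
    have h1 := ((hsq.const_mul (lam * b^2)).const_add (1 - lam)).const_mul u
    have h2 := (hsq.const_mul (lam * a^2)).const_add (1 - lam)
    have h3 := hDd.pow 2
    have h4 := (h1.add h2).sub h3
    exact h4.congr_deriv (by rw [hK', hDv]; push_cast; ring)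
  set Kv : ℝ := u * (1 - lam + lam * b^2 * (1+δ)^2)
      + (1 - lam + lam * a^2 * (1+δ)^2) - (1 - lam + lam * a * (1 + δ))^2 with hKv
  have hKvpos : 0 < Kv := hKval ▸ hKpos
  set S : ℝ := Real.sqrt Kv with hSdef
  have hSpos : 0 < S := Real.sqrt_pos.mpr hKvpos
  have hS2 : S^2 = Kv := Real.sq_sqrt hKvpos.le
  have hsqrtd : HasDerivAt (fun x : ℝ => Real.sqrt (u * (1 - lam + lam * b^2 * (1+x)^2)
      + (1 - lam + lam * a^2 * (1+x)^2) - (1 - lam + lam * a * (1 + x))^2))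
      (K' / (2 * S)) δ := hKd.sqrt (ne_of_gt hKvpos)
  have hfd : HasDerivAt f ((lam * a * S - Dv * (K' / (2 * S))) / S^2) δ :=
    hDd.div hsqrtd (ne_of_gt hSpos)
  have hdiff : DifferentiableAt ℝ s δ :=
    hfd.differentiableAt.congr_of_eventuallyEq heq
  -- closed form of the derivative
  set E : ℝ := 2*lam*(1-lam)*(a*(1+u) - (a^2+u*b^2)*(1+δ)) with hE
  have hEeq : 2 * (lam * a) * Kv - Dv * K' = E := by
    rw [hKv, hDv, hK', hDv, hE]; ring
  have hderiv : deriv s δ = E / (2 * S^3) := by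
    rw [heq.deriv_eq, hfd.deriv]
    rw [div_eq_div_iff (by positivity) (by positivity)]
    rw [← hEeq, ← hS2]
    field_simp
  -- sign analysis
  have key : 0 < deriv s δ ↔ (a^2 + b^2*u) * (1+δ) < a * (1+u) := by
    rw [hderiv, div_pos_iff]
    have hc : (0:ℝ) < 2 * S^3 := by positivity
    constructor
    · rintro (⟨h, -⟩ | ⟨-, h⟩)
      · rw [hE] at h
        nlinarith [mul_pos hl h1l]
      · linarith
    · intro h
      refine Or.inl ⟨?_, hc⟩
      rw [hE]
      nlinarith [mul_pos hl h1l]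
  have h12 : (a * (1 + b^2/a^2 * u) * (1+δ) < 1 + u) ↔
      ((a^2 + b^2*u) * (1+δ) < a * (1+u)) := by
    have hrw : a * (1 + b^2/a^2 * u) = (a^2 + b^2*u) / a := by
      field_simp
    rw [hrw, div_mul_eq_mul_div, div_lt_iff₀ ha, mul_comm a (1+u)]
  exact ⟨hKpos, hdiff, key.trans h12.symm, key⟩
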